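/- arXiv:1805.01139 — 2 statements merged into one kernel-verified Lean document; each statement's English description precedes it below -/
import Mathlib

section
/- For i ∈ {1,2}, let lp_i be a coherent conditional lower prevision on C_i ⊆ C(X_i) with natural extension E_i to C(X_i), and let 𝔅_i ⊆ P_∅(X_i). Then for every gamble f on X1 and every gamble h on X2 (External additivity): (lp1⊗lp2)(f + h) = E_1(f) + E_2(h), where f + h denotes the gamble (x1,x2) ↦ f(x1) + h(x2), E_i(·) := E_i(·|X_i), and (lp1⊗lp2)(·) abbreviates (lp1⊗lp2)(·|X1×X2). -/
open scoped BigOperators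

namespace IPaper

variable {X : Type*}

/-- A gamble on `X`: a bounded real-valued function. -/
def IsGamble (f : X → ℝ) : Prop := ∃ M : ℝ, ∀ x, |f x| ≤ M

/-- The indicator gamble of an event. -/
noncomputable def ind (B : Set X) : X → ℝ := Set.indicator B 1

/-- The set `G_{>0}(X)` of nonnegative nonzero gambles. -/
def Gpos (X : Type*) : Set (X → ℝ) := {f | IsGamble f ∧ 0 ≤ f ∧ f ≠ 0}

/-- A coherent set of desirable gambles. -/
structure CoherentSDG (D : Set (X → ℝ)) : Prop where
  subset_gambles : ∀ f ∈ D, IsGamble f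
  d1 : ∀ f : X → ℝ, IsGamble f → 0 ≤ f → f ≠ 0 → f ∈ D
  d2 : ∀ f ∈ D, ∀ l : ℝ, 0 < l → l • f ∈ D
  d3 : ∀ f ∈ D, ∀ g ∈ D, f + g ∈ D
  d4 : ∀ f : X → ℝ, f ≤ 0 → f ∉ D

/-- `posi A`: positive linear hull of `A`. -/
def posi (A : Set (X → ℝ)) : Set (X → ℝ) :=
  {g | ∃ (n : ℕ) (l : Fin (n + 1) → ℝ) (h : Fin (n + 1) → X → ℝ),
    (∀ i, 0 < l i) ∧ (∀ i, h i ∈ A) ∧ g = ∑ i, l i • h i}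

/-- `E(A) := posi (A ∪ G_{>0}(X))`. -/
def natExtSet (A : Set (X → ℝ)) : Set (X → ℝ) := posi (A ∪ Gpos X)

/-- `C(X)`: all pairs of a gamble and a nonempty event. -/
def domC (X : Type*) : Set ((X → ℝ) × Set X) := {p | IsGamble p.1 ∧ p.2.Nonempty}

/-- The conditional lower prevision `lp_D` derived from a set of gambles `D`. -/
noncomputable def lpOf (D : Set (X → ℝ)) (f : X → ℝ) (B : Set X) : EReal :=
  sSup (Real.toEReal '' {m : ℝ | (fun x => (f x - m) * ind B x) ∈ D})

/-- Coherence (Williams) of a conditional lower prevision on a domain `C`. -/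
def Coherent (C : Set ((X → ℝ) × Set X)) (lp : (X → ℝ) → Set X → EReal) : Prop :=
  ∃ D : Set (X → ℝ), CoherentSDG D ∧ ∀ p ∈ C, lp p.1 p.2 = lpOf D p.1 p.2

/-- The set `A_lp`. -/
def Alp (C : Set ((X → ℝ) × Set X)) (lp : (X → ℝ) → Set X → EReal) : Set (X → ℝ) :=
  {g | ∃ p ∈ C, ∃ m : ℝ, (m : EReal) < lp p.1 p.2 ∧ g = fun x => (p.1 x - m) * ind p.2 x}

/-- `E(lp) := E(A_lp)`. -/
def ElpSet (C : Set ((X → ℝ) × Set X)) (lp : (X → ℝ) → Set X → EReal) : Set (X → ℝ) :=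
  natExtSet (Alp C lp)

/-- The natural extension of `lp` to all of `C(X)`. -/
noncomputable def natExtLP (C : Set ((X → ℝ) × Set X)) (lp : (X → ℝ) → Set X → EReal)
    (f : X → ℝ) (B : Set X) : EReal :=
  lpOf (ElpSet C lp) f B

/-- Simple `B`-measurable gamble. -/
def SimpleMeas (Bfam : Set (Set X)) (g : X → ℝ) : Prop :=
  ∃ (c0 : ℝ) (n : ℕ) (c : Fin n → ℝ) (Bs : Fin n → Set X),
    0 ≤ c0 ∧ (∀ i, 0 ≤ c i) ∧ (∀ i, Bs i ∈ Bfam) ∧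
    g = fun x => c0 + ∑ i, c i * ind (Bs i) x

/-- `B`-measurable gamble: uniform limit of nonnegative simple `B`-measurable gambles. -/
def BMeas (Bfam : Set (Set X)) (g : X → ℝ) : Prop :=
  ∃ gs : ℕ → X → ℝ, (∀ n, 0 ≤ gs n ∧ SimpleMeas Bfam (gs n)) ∧
    TendstoUniformly gs g Filter.atTop

/-- A conditional linear prevision on `C(X)`: a coherent self-conjugate conditional
lower prevision on the full domain. -/
def CondLinPrev (P : (X → ℝ) → Set X → EReal) : Prop :=
  Coherent (domC X) P ∧ ∀ p ∈ domC X, P p.1 p.2 = -P (-p.1) p.2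

section Product

variable {X1 X2 : Type*}

/-- `A_{1→2}`. -/
def A12 (D2 : Set (X2 → ℝ)) (F1 : Set (Set X1)) : Set (X1 × X2 → ℝ) :=
  {g | ∃ f2 ∈ D2, ∃ B1 ∈ F1 ∪ {Set.univ}, g = fun p => f2 p.2 * ind B1 p.1}

/-- `A_{2→1}`. -/
def A21 (D1 : Set (X1 → ℝ)) (F2 : Set (Set X2)) : Set (X1 × X2 → ℝ) :=
  {g | ∃ f1 ∈ D1, ∃ B2 ∈ F2 ∪ {Set.univ}, g = fun p => f1 p.1 * ind B2 p.2}

/-- `D1 ⊗ D2`, relative to the families of conditioning events `F1`, `F2`. -/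
def indNatExt (D1 : Set (X1 → ℝ)) (D2 : Set (X2 → ℝ))
    (F1 : Set (Set X1)) (F2 : Set (Set X2)) : Set (X1 × X2 → ℝ) :=
  natExtSet (A12 D2 F1 ∪ A21 D1 F2)

/-- `marg_1(D)`. -/
def marg1 (D : Set (X1 × X2 → ℝ)) : Set (X1 → ℝ) :=
  {f | IsGamble f ∧ (fun p : X1 × X2 => f p.1) ∈ D}

/-- `marg_2(D)`. -/
def marg2 (D : Set (X1 × X2 → ℝ)) : Set (X2 → ℝ) :=
  {f | IsGamble f ∧ (fun p : X1 × X2 => f p.2) ∈ D}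

/-- `marg_1(D|B2)`. -/
def marg1c (D : Set (X1 × X2 → ℝ)) (B2 : Set X2) : Set (X1 → ℝ) :=
  {f | IsGamble f ∧ (fun p : X1 × X2 => f p.1 * ind B2 p.2) ∈ D}

/-- `marg_2(D|B1)`. -/
def marg2c (D : Set (X1 × X2 → ℝ)) (B1 : Set X1) : Set (X2 → ℝ) :=
  {f | IsGamble f ∧ (fun p : X1 × X2 => f p.2 * ind B1 p.1) ∈ D}

/-- Epistemic independence of a set of desirable gambles on `X1 × X2`. -/
def EpIndSDG (F1 : Set (Set X1)) (F2 : Set (Set X2)) (D : Set (X1 × X2 → ℝ)) : Prop :=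
  (∀ B2 ∈ F2, marg1c D B2 = marg1 D) ∧ (∀ B1 ∈ F1, marg2c D B1 = marg2 D)

/-- Independent product (of sets of desirable gambles). -/
def IndProductSDG (F1 : Set (Set X1)) (F2 : Set (Set X2))
    (D1 : Set (X1 → ℝ)) (D2 : Set (X2 → ℝ)) (D : Set (X1 × X2 → ℝ)) : Prop :=
  CoherentSDG D ∧ EpIndSDG F1 F2 D ∧ marg1 D = D1 ∧ marg2 D = D2

/-- The independent natural extension `lp1 ⊗ lp2` on `C(X1 × X2)`. -/
noncomputable def lpProd (C1 : Set ((X1 → ℝ) × Set X1)) (lp1 : (X1 → ℝ) → Set X1 → EReal)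
    (C2 : Set ((X2 → ℝ) × Set X2)) (lp2 : (X2 → ℝ) → Set X2 → EReal)
    (F1 : Set (Set X1)) (F2 : Set (Set X2)) :
    (X1 × X2 → ℝ) → Set (X1 × X2) → EReal :=
  lpOf (indNatExt (ElpSet C1 lp1) (ElpSet C2 lp2) F1 F2)

/-- An independent domain `C ⊆ C(X1 × X2)`. -/
def IndepDomain (F1 : Set (Set X1)) (F2 : Set (Set X2))
    (C : Set ((X1 × X2 → ℝ) × Set (X1 × X2))) : Prop :=
  (∀ (f1 : X1 → ℝ) (B1 : Set X1), IsGamble f1 → B1.Nonempty → ∀ B2 ∈ F2,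
    (((fun p : X1 × X2 => f1 p.1), B1 ×ˢ (Set.univ : Set X2)) ∈ C ↔
      ((fun p : X1 × X2 => f1 p.1), B1 ×ˢ B2) ∈ C)) ∧
  (∀ (f2 : X2 → ℝ) (B2 : Set X2), IsGamble f2 → B2.Nonempty → ∀ B1 ∈ F1,
    (((fun p : X1 × X2 => f2 p.2), (Set.univ : Set X1) ×ˢ B2) ∈ C ↔
      ((fun p : X1 × X2 => f2 p.2), B1 ×ˢ B2) ∈ C))

/-- Epistemic independence of a conditional lower prevision on a domain `C`. -/
def EpIndLP (F1 : Set (Set X1)) (F2 : Set (Set X2))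
    (C : Set ((X1 × X2 → ℝ) × Set (X1 × X2)))
    (lp : (X1 × X2 → ℝ) → Set (X1 × X2) → EReal) : Prop :=
  (∀ (f1 : X1 → ℝ) (B1 : Set X1), IsGamble f1 → B1.Nonempty →
    ((fun p : X1 × X2 => f1 p.1), B1 ×ˢ (Set.univ : Set X2)) ∈ C → ∀ B2 ∈ F2,
    lp (fun p : X1 × X2 => f1 p.1) (B1 ×ˢ (Set.univ : Set X2)) =
      lp (fun p : X1 × X2 => f1 p.1) (B1 ×ˢ B2)) ∧
  (∀ (f2 : X2 → ℝ) (B2 : Set X2), IsGamble f2 → B2.Nonempty →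
    ((fun p : X1 × X2 => f2 p.2), (Set.univ : Set X1) ×ˢ B2) ∈ C → ∀ B1 ∈ F1,
    lp (fun p : X1 × X2 => f2 p.2) ((Set.univ : Set X1) ×ˢ B2) =
      lp (fun p : X1 × X2 => f2 p.2) (B1 ×ˢ B2))

/-- Independent product of two conditional lower previsions, on the joint domain `C`. -/
def IndProductLP (F1 : Set (Set X1)) (F2 : Set (Set X2))
    (C1 : Set ((X1 → ℝ) × Set X1)) (lp1 : (X1 → ℝ) → Set X1 → EReal)
    (C2 : Set ((X2 → ℝ) × Set X2)) (lp2 : (X2 → ℝ) → Set X2 → EReal)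
    (C : Set ((X1 × X2 → ℝ) × Set (X1 × X2)))
    (lp : (X1 × X2 → ℝ) → Set (X1 × X2) → EReal) : Prop :=
  Coherent C lp ∧ EpIndLP F1 F2 C lp ∧
  (∀ p ∈ C1, lp (fun q : X1 × X2 => p.1 q.1) (p.2 ×ˢ (Set.univ : Set X2)) = lp1 p.1 p.2) ∧
  (∀ p ∈ C2, lp (fun q : X1 × X2 => p.1 q.2) ((Set.univ : Set X1) ×ˢ p.2) = lp2 p.1 p.2)

end Product


section Aux
variable {X : Type*}

-- ============ auxiliary lemmas ============

lemma isGamble_const (c : ℝ) : IsGamble (fun _ : X => c) := ⟨|c|, fun _ => le_rfl⟩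

lemma isGamble_ind (B : Set X) : IsGamble (ind B) := by
  refine ⟨1, fun x => ?_⟩
  by_cases hx : x ∈ B <;> simp [ind, hx]

lemma ind_nonneg (B : Set X) (x : X) : 0 ≤ ind B x :=
  Set.indicator_nonneg (fun _ _ => zero_le_one) x

lemma my_le_of_eps {a b : ℝ} (H : ∀ ε : ℝ, 0 < ε → a ≤ b + ε) : a ≤ b := by
  by_contra hlt
  push_neg at hlt
  have := H ((a - b) / 2) (by linarith)
  linarith

lemma mem_posi {A : Set (X → ℝ)} {g : X → ℝ} (hg : g ∈ A) : g ∈ posi A :=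
  ⟨0, fun _ => 1, fun _ => g, fun _ => one_pos, fun _ => hg, by simp⟩

lemma posi_smul {A : Set (X → ℝ)} {g : X → ℝ} (hg : g ∈ posi A) {c : ℝ} (hc : 0 < c) :
    c • g ∈ posi A := by
  obtain ⟨n, l, k, hl, hk, rfl⟩ := hg
  exact ⟨n, fun i => c * l i, k, fun i => mul_pos hc (hl i), hk, by
    simp [Finset.smul_sum, smul_smul]⟩

lemma posi_add_single {A : Set (X → ℝ)} {g : X → ℝ} (hg : g ∈ posi A) {c : ℝ} {k : X → ℝ}
    (hc : 0 < c) (hk : k ∈ A) : g + c • k ∈ posi A := by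
  obtain ⟨n, l, p, hl, hp, rfl⟩ := hg
  refine ⟨n + 1, Fin.snoc l c, Fin.snoc p k, ?_, ?_, ?_⟩
  · intro i
    induction i using Fin.lastCases with
    | last => simp [hc]
    | cast i => simpa using hl i
  · intro i
    induction i using Fin.lastCases with
    | last => simpa using hk
    | cast i => simpa using hp i
  · conv_rhs => rw [Fin.sum_univ_castSucc]
    simp

lemma posi_add {A : Set (X → ℝ)} {g1 g2 : X → ℝ} (h1 : g1 ∈ posi A) (h2 : g2 ∈ posi A) :
    g1 + g2 ∈ posi A := by
  obtain ⟨n, l, p, hl, hp, rfl⟩ := h2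
  induction n with
  | zero => simpa using posi_add_single h1 (hl 0) (hp 0)
  | succ n ih =>
      rw [Fin.sum_univ_castSucc, ← add_assoc]
      exact posi_add_single (ih (fun i => l i.castSucc) (fun i => p i.castSucc)
        (fun i => hl _) (fun i => hp _)) (hl _) (hp _)

lemma posi_subset {A S : Set (X → ℝ)} (hAS : A ⊆ S)
    (hsmul : ∀ g ∈ S, ∀ c : ℝ, 0 < c → c • g ∈ S)
    (hadd : ∀ g ∈ S, ∀ g' ∈ S, g + g' ∈ S) : posi A ⊆ S := by
  rintro g ⟨n, l, k, hl, hk, rfl⟩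
  induction n with
  | zero =>
      simpa using hsmul _ (hAS (hk 0)) _ (hl 0)
  | succ n ih =>
      rw [Fin.sum_univ_castSucc]
      exact hadd _ (ih (fun i => l i.castSucc) (fun i => k i.castSucc)
        (fun i => hl _) (fun i => hk _)) _ (hsmul _ (hAS (hk _)) _ (hl _))


lemma gpos_subset {D : Set (X → ℝ)} (hD : CoherentSDG D) : Gpos X ⊆ D :=
  fun g hg => hD.d1 g hg.1 hg.2.1 hg.2.2

lemma CoherentSDG.posi_le {D A : Set (X → ℝ)} (hD : CoherentSDG D) (hA : A ⊆ D) : posi A ⊆ D :=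
  posi_subset hA (fun g hg c hc => hD.d2 g hg c hc) (fun g hg g' hg' => hD.d3 g hg g' hg')

lemma CoherentSDG.natExtSet_le {D A : Set (X → ℝ)} (hD : CoherentSDG D) (hA : A ⊆ D) :
    natExtSet A ⊆ D :=
  hD.posi_le (Set.union_subset hA (gpos_subset hD))

lemma CoherentSDG.natExtSet_coherent {D A : Set (X → ℝ)} (hD : CoherentSDG D) (hA : A ⊆ D) :
    CoherentSDG (natExtSet A) where
  subset_gambles g hg := hD.subset_gambles g (hD.natExtSet_le hA hg)
  d1 f hf h0 hne := mem_posi (Or.inr ⟨hf, h0, hne⟩)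
  d2 f hf l hl := posi_smul hf hl
  d3 f hf g hg := posi_add hf hg
  d4 f hf hmem := hD.d4 f hf (hD.natExtSet_le hA hmem)

lemma CoherentSDG.mem_of_le {D : Set (X → ℝ)} (hD : CoherentSDG D) {g g' : X → ℝ}
    (hg : g ∈ D) (hg' : IsGamble g') (hle : g ≤ g') : g' ∈ D := by
  by_cases heq : g' = g
  · rwa [heq]
  · have hsub : IsGamble (g' - g) := by
      obtain ⟨M, hM⟩ := hg'
      obtain ⟨N, hN⟩ := hD.subset_gambles g hg
      exact ⟨M + N, fun x => by
        have h1 := hM x; have h2 := hN x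
        have h3 : |g' x - g x| ≤ |g' x| + |g x| := abs_sub _ _
        simpa using h3.trans (add_le_add h1 h2)⟩
    have hrw : g' = g + (g' - g) := by abel
    rw [hrw]
    refine hD.d3 g hg _ (hD.d1 _ hsub (Pi.le_def.2 fun x => ?_) (sub_ne_zero.2 heq))
    have := hle x
    simp only [Pi.zero_apply, Pi.sub_apply]
    linarith

lemma sset_nonempty {X : Type*} [Nonempty X] {E : Set (X → ℝ)} (hE : CoherentSDG E)
    {g : X → ℝ} (hg : IsGamble g) : {m : ℝ | (fun x => g x - m) ∈ E}.Nonempty := by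
  obtain ⟨M, hM⟩ := hg
  refine ⟨-(M + 1), hE.d1 _ ⟨M + (M + 1), fun x => ?_⟩ (Pi.le_def.2 fun x => ?_) (fun h0 => ?_)⟩
  · have h1 := hM x; rw [abs_le] at h1
    show |g x - -(M + 1)| ≤ M + (M + 1)
    rw [abs_le]; constructor <;> linarith
  · have h1 := hM x; rw [abs_le] at h1
    show (0 : ℝ) ≤ g x - -(M + 1)
    linarith
  · have x := Classical.arbitrary X
    have h2 : g x - -(M + 1) = 0 := congrFun h0 x
    have h1 := hM x; rw [abs_le] at h1
    linarith

lemma sset_bddAbove {X : Type*} {E : Set (X → ℝ)} (hE : CoherentSDG E)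
    {g : X → ℝ} (hg : IsGamble g) : BddAbove {m : ℝ | (fun x => g x - m) ∈ E} := by
  obtain ⟨M, hM⟩ := hg
  refine ⟨M, fun m hm => ?_⟩
  by_contra hMm
  push_neg at hMm
  exact hE.d4 _ (Pi.le_def.2 fun x => by
    have h1 := hM x; rw [abs_le] at h1
    show g x - m ≤ (0 : ℝ)
    linarith) hm

lemma sSup_image_toEReal {S : Set ℝ} (hne : S.Nonempty) (hbdd : BddAbove S) :
    sSup (Real.toEReal '' S) = ((sSup S : ℝ) : EReal) :=
  (Monotone.map_csSup_of_continuousAt continuous_coe_real_ereal.continuousAt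
    (fun _ _ hab => EReal.coe_le_coe_iff.2 hab) hne hbdd).symm

lemma lpOf_univ (D : Set (X → ℝ)) (g : X → ℝ) :
    lpOf D g Set.univ = sSup (Real.toEReal '' {m : ℝ | (fun x => g x - m) ∈ D}) := by
  have h : {m : ℝ | (fun x => (g x - m) * ind Set.univ x) ∈ D} =
      {m : ℝ | (fun x => g x - m) ∈ D} := by
    ext m
    simp [ind]
  rw [lpOf, h]

/-- The submodule of bounded functions. -/
def bddV (X : Type*) : Submodule ℝ (X → ℝ) where
  carrier := {g | IsGamble g}
  add_mem' := by
    rintro a b ⟨M, hM⟩ ⟨N, hN⟩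
    exact ⟨M + N, fun x => by
      simpa using (abs_add_le (a x) (b x)).trans (add_le_add (hM x) (hN x))⟩
  zero_mem' := ⟨0, fun x => by simp⟩
  smul_mem' := by
    rintro c a ⟨M, hM⟩
    exact ⟨|c| * M, fun x => by
      rw [Pi.smul_apply, smul_eq_mul, abs_mul]
      exact mul_le_mul_of_nonneg_left (hM x) (abs_nonneg c)⟩

lemma lin_bound {X : Type*} (P : bddV X →ₗ[ℝ] ℝ)
    (hpos : ∀ v : bddV X, 0 ≤ (v : X → ℝ) → 0 ≤ P v)
    (hone : P ⟨fun _ => 1, isGamble_const 1⟩ = 1)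
    (v : bddV X) (M : ℝ) (hM : ∀ x, |(v : X → ℝ) x| ≤ M) : |P v| ≤ M := by
  have h1 : 0 ≤ P (M • (⟨fun _ => 1, isGamble_const 1⟩ : bddV X) - v) := by
    refine hpos _ (Pi.le_def.2 fun x => ?_)
    have h2 := hM x
    rw [abs_le] at h2
    show (0 : ℝ) ≤ M * 1 - (v : X → ℝ) x
    linarith
  have h3 : 0 ≤ P (M • (⟨fun _ => 1, isGamble_const 1⟩ : bddV X) + v) := by
    refine hpos _ (Pi.le_def.2 fun x => ?_)
    have h2 := hM x
    rw [abs_le] at h2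
    show (0 : ℝ) ≤ M * 1 + (v : X → ℝ) x
    linarith
  rw [map_sub, map_smul, hone, smul_eq_mul, mul_one] at h1
  rw [map_add, map_smul, hone, smul_eq_mul, mul_one] at h3
  rw [abs_le]
  constructor <;> linarith

lemma exists_lin {X : Type*} [Nonempty X] {E : Set (X → ℝ)} (hE : CoherentSDG E)
    (g0 : X → ℝ) (hg0 : IsGamble g0) (ε : ℝ) (hε : 0 < ε) :
    ∃ P : bddV X →ₗ[ℝ] ℝ,
      (∀ v : bddV X, 0 ≤ (v : X → ℝ) → 0 ≤ P v) ∧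
      (∀ v : bddV X, (v : X → ℝ) ∈ E → 0 ≤ P v) ∧
      P ⟨fun _ => 1, isGamble_const 1⟩ = 1 ∧
      P ⟨g0, hg0⟩ ≤ sSup {m : ℝ | (fun x => g0 x - m) ∈ E} + ε := by
  classical
  set Q : ℝ := sSup {m : ℝ | (fun x => g0 x - m) ∈ E} with hQ
  have hQle : ∀ μ : ℝ, (fun x => g0 x - μ) ∈ E → μ ≤ Q :=
    fun μ hμ => le_csSup (sset_bddAbove hE hg0) hμ
  set w : X → ℝ := fun x => (Q + ε) - g0 x with hwdef
  set E' : Set (X → ℝ) := posi (E ∪ {w}) with hE'def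
  have hEsub : E ⊆ E' := fun g hg => mem_posi (Or.inl hg)
  have hwE' : w ∈ E' := mem_posi (Or.inr rfl)
  have hGpos : Gpos X ⊆ E' := fun g hg => hEsub (gpos_subset hE hg)
  have hgu : IsGamble (fun x => g0 x - (Q + ε / 2)) := by
    obtain ⟨M, hM⟩ := hg0
    exact ⟨M + |Q + ε / 2|, fun x => (abs_sub _ _).trans (add_le_add (hM x) le_rfl)⟩
  -- every element of E' is positive somewhere
  have hkey : ∀ g ∈ E', ∃ x, 0 < g x := by
    intro g hg
    by_contra hcon
    push_neg at hcon
    have hstruct : g ∈ {g : X → ℝ |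
        (∃ g2 ∈ E, ∃ t : ℝ, 0 ≤ t ∧ g = g2 + t • w) ∨ (∃ t : ℝ, 0 < t ∧ g = t • w)} := by
      refine posi_subset ?_ ?_ ?_ hg
      · rintro g' (hg' | hg')
        · exact Or.inl ⟨g', hg', 0, le_rfl, by simp⟩
        · rw [Set.mem_singleton_iff] at hg'
          exact Or.inr ⟨1, one_pos, by simp [hg']⟩
      · rintro g' (⟨g2, hg2, t, ht, rfl⟩ | ⟨t, ht, rfl⟩) c hc
        · exact Or.inl ⟨c • g2, hE.d2 _ hg2 _ hc, c * t, mul_nonneg hc.le ht, by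
            rw [smul_add, smul_smul]⟩
        · exact Or.inr ⟨c * t, mul_pos hc ht, by rw [smul_smul]⟩
      · rintro g' hg' g'' hg''
        rcases hg' with ⟨g2, hg2, t, ht, rfl⟩ | ⟨t, ht, rfl⟩ <;>
          rcases hg'' with ⟨g2', hg2', t', ht', rfl⟩ | ⟨t', ht', rfl⟩
        · exact Or.inl ⟨g2 + g2', hE.d3 _ hg2 _ hg2', t + t', by linarith, by
            rw [add_smul]; abel⟩
        · exact Or.inl ⟨g2, hg2, t + t', by linarith, by rw [add_smul]; abel⟩
        · exact Or.inl ⟨g2', hg2', t + t', by linarith, by rw [add_smul]; abel⟩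
        · exact Or.inr ⟨t + t', by linarith, by rw [add_smul]⟩
    rcases hstruct with ⟨g2, hg2, t, ht, rfl⟩ | ⟨t, ht, rfl⟩
    · rcases ht.eq_or_lt with rfl | htpos
      · refine hE.d4 g2 (Pi.le_def.2 fun x => ?_) hg2
        have h1 : g2 x + (0:ℝ) • w x ≤ 0 := hcon x
        simp only [zero_smul, add_zero] at h1
        show g2 x ≤ (0 : ℝ)
        exact h1
      · have huE : (fun x => g0 x - (Q + ε / 2)) ∈ E := by
          have hmem : t • (fun x => g0 x - (Q + ε / 2)) ∈ E := by
            refine hE.mem_of_le hg2 ?_ (Pi.le_def.2 fun x => ?_)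
            · obtain ⟨M, hM⟩ := hgu
              exact ⟨|t| * M, fun x => by
                rw [Pi.smul_apply, smul_eq_mul, abs_mul]
                exact mul_le_mul_of_nonneg_left (hM x) (abs_nonneg t)⟩
            · have h1 : g2 x + t * ((Q + ε) - g0 x) ≤ 0 := hcon x
              show g2 x ≤ t * (g0 x - (Q + ε / 2))
              nlinarith [mul_pos htpos (half_pos hε)]
          have h2 := hE.d2 _ hmem (1 / t) (by positivity)
          rwa [smul_smul, one_div, inv_mul_cancel₀ (ne_of_gt htpos), one_smul] at h2
        have := hQle _ huE
        linarith
    · have hge : ∀ x, Q + ε ≤ g0 x := by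
        intro x
        have h1 : t * ((Q + ε) - g0 x) ≤ 0 := hcon x
        nlinarith
      have huE : (fun x => g0 x - (Q + ε / 2)) ∈ E := by
        refine hE.d1 _ hgu (Pi.le_def.2 fun x => ?_) (fun h0 => ?_)
        · show (0 : ℝ) ≤ g0 x - (Q + ε / 2)
          have := hge x
          linarith
        · have x := Classical.arbitrary X
          have h2 : g0 x - (Q + ε / 2) = 0 := congrFun h0 x
          have := hge x
          linarith
      have := hQle _ huE
      linarith
  -- the upper prevision associated with E'
  set T : bddV X → Set ℝ := fun v => {μ : ℝ | (fun x => μ - (v : X → ℝ) x) ∈ E'} with hT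
  have hTne : ∀ v : bddV X, (T v).Nonempty := by
    intro v
    obtain ⟨M, hM⟩ := v.2
    refine ⟨M + 1, hGpos ⟨⟨M + (M + 1), fun x => ?_⟩, Pi.le_def.2 fun x => ?_, fun h0 => ?_⟩⟩
    · have h1 := hM x; rw [abs_le] at h1
      show |M + 1 - (v : X → ℝ) x| ≤ M + (M + 1)
      rw [abs_le]; constructor <;> linarith
    · have h1 := hM x; rw [abs_le] at h1
      show (0 : ℝ) ≤ M + 1 - (v : X → ℝ) x
      linarith
    · have x := Classical.arbitrary X
      have h2 : M + 1 - (v : X → ℝ) x = 0 := congrFun h0 x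
      have h1 := hM x; rw [abs_le] at h1
      linarith
  have hTbdd : ∀ v : bddV X, BddBelow (T v) := by
    intro v
    obtain ⟨M, hM⟩ := v.2
    refine ⟨-M, fun μ hμ => ?_⟩
    obtain ⟨x, hx⟩ := hkey _ hμ
    have h1 := hM x; rw [abs_le] at h1
    have hx' : 0 < μ - (v : X → ℝ) x := hx
    linarith
  set U : bddV X → ℝ := fun v => sInf (T v) with hU
  have hUle : ∀ (v : bddV X) (μ : ℝ), μ ∈ T v → U v ≤ μ := fun v μ hm => csInf_le (hTbdd v) hm
  have hUge : ∀ (v : bddV X) (b : ℝ), (∀ μ ∈ T v, b ≤ μ) → b ≤ U v :=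
    fun v b hb => le_csInf (hTne v) hb
  have hUadd : ∀ v v' : bddV X, U (v + v') ≤ U v + U v' := by
    intro v v'
    apply my_le_of_eps
    intro δ hδ
    obtain ⟨μ, hμ, hμlt⟩ := exists_lt_of_csInf_lt (hTne v)
      (show sInf (T v) < U v + δ / 2 from lt_add_of_pos_right _ (half_pos hδ))
    obtain ⟨μ', hμ', hμ'lt⟩ := exists_lt_of_csInf_lt (hTne v')
      (show sInf (T v') < U v' + δ / 2 from lt_add_of_pos_right _ (half_pos hδ))
    have hmem : μ + μ' ∈ T (v + v') := by
      show (fun x => (μ + μ') - ((v + v' : bddV X) : X → ℝ) x) ∈ E'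
      have heq : (fun x => (μ + μ') - ((v + v' : bddV X) : X → ℝ) x) =
          (fun x => μ - (v : X → ℝ) x) + (fun x => μ' - (v' : X → ℝ) x) := by
        funext x
        show (μ + μ') - ((v : X → ℝ) x + (v' : X → ℝ) x) = (μ - (v : X → ℝ) x) + (μ' - (v' : X → ℝ) x)
        ring
      rw [heq]
      exact posi_add hμ hμ'
    have := hUle _ _ hmem
    linarith
  have hUsmul_le : ∀ (c : ℝ), 0 < c → ∀ v : bddV X, U (c • v) ≤ c * U v := by
    intro c hc v
    have h2 : ∀ μ ∈ T v, U (c • v) ≤ c * μ := by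
      intro μ hμ
      refine hUle _ _ ?_
      show (fun x => c * μ - ((c • v : bddV X) : X → ℝ) x) ∈ E'
      have heq : (fun x => c * μ - ((c • v : bddV X) : X → ℝ) x) =
          c • (fun x => μ - (v : X → ℝ) x) := by
        funext x
        show c * μ - c * (v : X → ℝ) x = c * (μ - (v : X → ℝ) x)
        ring
      rw [heq]
      exact posi_smul hμ hc
    have h3 : U (c • v) / c ≤ U v :=
      hUge v _ (fun μ hμ => (div_le_iff₀ hc).2 (by rw [mul_comm]; exact h2 μ hμ))
    have h4 := (div_le_iff₀ hc).1 h3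
    linarith [h4, mul_comm (U v) c]
  have hUsmul : ∀ (c : ℝ), 0 < c → ∀ v : bddV X, U (c • v) = c * U v := by
    intro c hc v
    refine le_antisymm (hUsmul_le c hc v) ?_
    have h2 := hUsmul_le c⁻¹ (inv_pos.2 hc) (c • v)
    rw [smul_smul, inv_mul_cancel₀ (ne_of_gt hc), one_smul] at h2
    have h3 := mul_le_mul_of_nonneg_left h2 hc.le
    calc c * U v ≤ c * (c⁻¹ * U (c • v)) := h3
    _ = U (c • v) := by field_simp
  have hUconst : ∀ c : ℝ, U (c • (⟨fun _ => 1, isGamble_const 1⟩ : bddV X)) = c := by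
    intro c
    apply le_antisymm
    · apply my_le_of_eps
      intro δ hδ
      refine le_trans (hUle _ (c + δ) ?_) le_rfl
      show (fun x => (c + δ) - ((c • (⟨fun _ => 1, isGamble_const 1⟩ : bddV X) : bddV X) : X → ℝ) x) ∈ E'
      refine hGpos ⟨⟨δ, fun x => ?_⟩, Pi.le_def.2 fun x => ?_, fun h0 => ?_⟩
      · show |(c + δ) - c * 1| ≤ δ
        have : (c + δ) - c * 1 = δ := by ring
        rw [this, abs_of_pos hδ]
      · show (0 : ℝ) ≤ (c + δ) - c * 1
        nlinarith
      · have x := Classical.arbitrary X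
        have h2 : (c + δ) - c * 1 = 0 := congrFun h0 x
        nlinarith
    · refine hUge _ c ?_
      intro μ hμ
      obtain ⟨x, hx⟩ := hkey _ hμ
      have hx' : (0:ℝ) < μ - c * 1 := hx
      nlinarith
  have honene : (⟨fun _ => 1, isGamble_const 1⟩ : bddV X) ≠ 0 := by
    intro h0
    have h2 : (1 : ℝ) = 0 := congrFun (congrArg Subtype.val h0) (Classical.arbitrary X)
    norm_num at h2
  obtain ⟨P, hPagree, hPle⟩ := exists_extension_of_le_sublinear
    (LinearPMap.mkSpanSingleton (⟨fun _ => 1, isGamble_const 1⟩ : bddV X) (1 : ℝ) honene) U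
    (fun c hc v => hUsmul c hc v) hUadd (by
      rintro ⟨x, hx⟩
      obtain ⟨c, rfl⟩ := Submodule.mem_span_singleton.1 hx
      rw [LinearPMap.mkSpanSingleton'_apply]
      show c * 1 ≤ U _
      rw [hUconst c, mul_one])
  have hUnegle : ∀ v : bddV X, (∀ δ : ℝ, 0 < δ → δ ∈ T (-v)) → 0 ≤ P v := by
    intro v hδmem
    have hUneg : U (-v) ≤ 0 := by
      apply my_le_of_eps
      intro δ hδ
      have := hUle _ _ (hδmem δ hδ)
      linarith
    have h1 := hPle (-v)
    rw [map_neg] at h1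
    linarith
  refine ⟨P, ?_, ?_, ?_, ?_⟩
  · intro v hv
    refine hUnegle v (fun δ hδ => ?_)
    show (fun x => δ - ((-v : bddV X) : X → ℝ) x) ∈ E'
    refine hGpos ⟨?_, Pi.le_def.2 fun x => ?_, fun h0 => ?_⟩
    · obtain ⟨M, hM⟩ := v.2
      refine ⟨δ + M, fun x => ?_⟩
      have h1 := hM x; rw [abs_le] at h1
      show |δ - -((v : X → ℝ) x)| ≤ δ + M
      rw [abs_le]; constructor <;> linarith
    · have h1 : (0 : X → ℝ) x ≤ (v : X → ℝ) x := Pi.le_def.1 hv x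
      have h1' : (0 : ℝ) ≤ (v : X → ℝ) x := h1
      show (0 : ℝ) ≤ δ - -((v : X → ℝ) x)
      linarith
    · have x := Classical.arbitrary X
      have h2 : δ - -((v : X → ℝ) x) = 0 := congrFun h0 x
      have h1' : (0 : ℝ) ≤ (v : X → ℝ) x := Pi.le_def.1 hv x
      linarith
  · intro v hv
    refine hUnegle v (fun δ hδ => ?_)
    show (fun x => δ - ((-v : bddV X) : X → ℝ) x) ∈ E'
    have heq : (fun x => δ - ((-v : bddV X) : X → ℝ) x) = (fun x => (v : X → ℝ) x + δ) := by
      funext x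
      show δ - -((v : X → ℝ) x) = (v : X → ℝ) x + δ
      ring
    rw [heq]
    refine hEsub (hE.mem_of_le hv ?_ (Pi.le_def.2 fun x => ?_))
    · obtain ⟨M, hM⟩ := v.2
      refine ⟨M + δ, fun x => ?_⟩
      have h1 := hM x; rw [abs_le] at h1
      show |(v : X → ℝ) x + δ| ≤ M + δ
      rw [abs_le]; constructor <;> linarith
    · show (v : X → ℝ) x ≤ (v : X → ℝ) x + δ
      linarith
  · have h2 := hPagree ⟨⟨fun _ => 1, isGamble_const 1⟩,
      Submodule.mem_span_singleton_self (⟨fun _ => 1, isGamble_const 1⟩ : bddV X)⟩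
    rw [LinearPMap.mkSpanSingleton_apply] at h2
    exact h2
  · refine le_trans (hPle _) ?_
    refine le_trans (hUle _ (Q + ε) ?_) le_rfl
    show (fun x => (Q + ε) - g0 x) ∈ E'
    exact hwE'

lemma coherent_ElpSet {X : Type*} {C : Set ((X → ℝ) × Set X)} (hC : C ⊆ domC X)
    {lp : (X → ℝ) → Set X → EReal} (hlp : Coherent C lp) :
    CoherentSDG (ElpSet C lp) := by
  obtain ⟨D, hD, heq⟩ := hlp
  have hAlp : Alp C lp ⊆ D := by
    rintro g ⟨p, hp, m, hm, rfl⟩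
    rw [heq p hp] at hm
    obtain ⟨e, he, hlt⟩ := lt_sSup_iff.1 hm
    obtain ⟨μ, hμ, rfl⟩ := he
    have hmlt : m < μ := by exact_mod_cast hlt
    obtain ⟨x0, hx0⟩ := (hC hp).2
    have hindm : (fun x => (μ - m) * ind p.2 x) ∈ D := by
      refine hD.d1 _ ⟨|μ - m|, fun x => ?_⟩ (Pi.le_def.2 fun x => ?_) (fun h0 => ?_)
      · have h1 : |ind p.2 x| ≤ 1 := by
          by_cases hxx : x ∈ p.2 <;> simp [ind, hxx]
        show |(μ - m) * ind p.2 x| ≤ |μ - m|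
        rw [abs_mul]
        nlinarith [abs_nonneg (μ - m), abs_nonneg (ind p.2 x)]
      · show (0 : ℝ) ≤ (μ - m) * ind p.2 x
        exact mul_nonneg (by linarith) (ind_nonneg _ _)
      · have h2 : (μ - m) * ind p.2 x0 = 0 := congrFun h0 x0
        rw [ind, Set.indicator_of_mem hx0, Pi.one_apply, mul_one] at h2
        linarith
    have hsum := hD.d3 _ hμ _ hindm
    have heq2 : (fun x => (p.1 x - m) * ind p.2 x) =
        (fun x => (p.1 x - μ) * ind p.2 x) + fun x => (μ - m) * ind p.2 x := by
      funext x
      show (p.1 x - m) * ind p.2 x = (p.1 x - μ) * ind p.2 x + (μ - m) * ind p.2 x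
      ring
    rw [heq2]
    exact hsum
  exact hD.natExtSet_coherent hAlp

lemma key_additivity {X1 X2 : Type*} [Nonempty X1] [Nonempty X2]
    {E1 : Set (X1 → ℝ)} {E2 : Set (X2 → ℝ)} (hE1 : CoherentSDG E1) (hE2 : CoherentSDG E2)
    (F1 : Set (Set X1)) (F2 : Set (Set X2)) (f : X1 → ℝ) (h : X2 → ℝ)
    (hf : IsGamble f) (hh : IsGamble h) :
    lpOf (indNatExt E1 E2 F1 F2) (fun p => f p.1 + h p.2) Set.univ =
      lpOf E1 f Set.univ + lpOf E2 h Set.univ := by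
  classical
  obtain ⟨Mf, hMf⟩ := hf
  obtain ⟨Mh, hMh⟩ := hh
  have hfG : IsGamble f := ⟨Mf, hMf⟩
  have hhG : IsGamble h := ⟨Mh, hMh⟩
  set S1 : Set ℝ := {m : ℝ | (fun x => f x - m) ∈ E1} with hS1
  set S2 : Set ℝ := {m : ℝ | (fun x => h x - m) ∈ E2} with hS2
  set S : Set ℝ := {m : ℝ | (fun x : X1 × X2 => f x.1 + h x.2 - m) ∈ indNatExt E1 E2 F1 F2}
    with hSdef
  have hS1ne : S1.Nonempty := sset_nonempty hE1 hfG
  have hS1bdd : BddAbove S1 := sset_bddAbove hE1 hfG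
  have hS2ne : S2.Nonempty := sset_nonempty hE2 hhG
  have hS2bdd : BddAbove S2 := sset_bddAbove hE2 hhG
  have hSne : S.Nonempty := by
    refine ⟨-(Mf + Mh + 1), ?_⟩
    show (fun x : X1 × X2 => f x.1 + h x.2 - -(Mf + Mh + 1)) ∈ indNatExt E1 E2 F1 F2
    refine mem_posi (Or.inr ⟨⟨Mf + Mh + (Mf + Mh + 1), fun x => ?_⟩,
      Pi.le_def.2 fun x => ?_, fun h0 => ?_⟩)
    · have h1 := hMf x.1; have h2 := hMh x.2; rw [abs_le] at h1 h2
      show |f x.1 + h x.2 - -(Mf + Mh + 1)| ≤ Mf + Mh + (Mf + Mh + 1)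
      rw [abs_le]; constructor <;> linarith
    · have h1 := hMf x.1; have h2 := hMh x.2; rw [abs_le] at h1 h2
      show (0 : ℝ) ≤ f x.1 + h x.2 - -(Mf + Mh + 1)
      linarith
    · have x := Classical.arbitrary (X1 × X2)
      have h3 : f x.1 + h x.2 - -(Mf + Mh + 1) = 0 := congrFun h0 x
      have h1 := hMf x.1; have h2 := hMh x.2; rw [abs_le] at h1 h2
      linarith
  -- the hard direction
  have hub : ∀ m ∈ S, m ≤ sSup S1 + sSup S2 := by
    intro m hm
    apply my_le_of_eps
    intro ε hε
    obtain ⟨P1, hP1pos, hP1E, hP1one, hP1f⟩ := exists_lin hE1 f hfG (ε / 2) (half_pos hε)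
    obtain ⟨P2, hP2pos, hP2E, hP2one, hP2h⟩ := exists_lin hE2 h hhG (ε / 2) (half_pos hε)
    rw [← hS1] at hP1f
    rw [← hS2] at hP2h
    obtain ⟨n, l, k, hl, hk, hFeq⟩ := hm
    have hkG : ∀ i, IsGamble (k i) := by
      intro i
      rcases hk i with (⟨f2, hf2, B1, _, hkeq⟩ | ⟨f1, hf1, B2, _, hkeq⟩) | hgp
      · obtain ⟨M, hM⟩ := hE2.subset_gambles f2 hf2
        refine ⟨|M|, fun p => ?_⟩
        have h1 : |ind B1 p.1| ≤ 1 := by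
          by_cases hxx : p.1 ∈ B1 <;> simp [ind, hxx]
        have h2 : k i p = f2 p.2 * ind B1 p.1 := congrFun hkeq p
        rw [h2, abs_mul]
        have h3 := (hM p.2).trans (le_abs_self M)
        nlinarith [abs_nonneg (f2 p.2), abs_nonneg (ind B1 p.1), abs_nonneg M]
      · obtain ⟨M, hM⟩ := hE1.subset_gambles f1 hf1
        refine ⟨|M|, fun p => ?_⟩
        have h1 : |ind B2 p.2| ≤ 1 := by
          by_cases hxx : p.2 ∈ B2 <;> simp [ind, hxx]
        have h2 : k i p = f1 p.1 * ind B2 p.2 := congrFun hkeq p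
        rw [h2, abs_mul]
        have h3 := (hM p.1).trans (le_abs_self M)
        nlinarith [abs_nonneg (f1 p.1), abs_nonneg (ind B2 p.2), abs_nonneg M]
      · exact hgp.1
    have hslice : ∀ i (x1 : X1), IsGamble (fun x2 => k i (x1, x2)) := by
      intro i x1
      obtain ⟨M, hM⟩ := hkG i
      exact ⟨M, fun x2 => hM (x1, x2)⟩
    set v2 : (i : Fin (n + 1)) → X1 → bddV X2 :=
      fun i x1 => ⟨fun x2 => k i (x1, x2), hslice i x1⟩ with hv2
    set w1 : Fin (n + 1) → X1 → ℝ := fun i x1 => P2 (v2 i x1) with hw1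
    have hw1G : ∀ i, IsGamble (w1 i) := by
      intro i
      obtain ⟨M, hM⟩ := hkG i
      exact ⟨M, fun x1 => lin_bound P2 hP2pos hP2one (v2 i x1) M (fun x2 => hM (x1, x2))⟩
    set c2 : ℝ := P2 ⟨h, hhG⟩ with hc2
    have hGdef : ((⟨f, hfG⟩ : bddV X1) + (c2 - m) • (⟨fun _ => 1, isGamble_const 1⟩ : bddV X1)) =
        ∑ i, l i • (⟨w1 i, hw1G i⟩ : bddV X1) := by
      apply Subtype.ext
      funext x1
      have e1 : ((f x1 - m) • (⟨fun _ => 1, isGamble_const 1⟩ : bddV X2) + (⟨h, hhG⟩ : bddV X2)) =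
          ∑ i, l i • v2 i x1 := by
        apply Subtype.ext
        funext x2
        have hF : f x1 + h x2 - m = (∑ i, l i • k i) (x1, x2) := congrFun hFeq (x1, x2)
        show (f x1 - m) * 1 + h x2 = _
        calc (f x1 - m) * 1 + h x2 = f x1 + h x2 - m := by ring
        _ = (∑ i, l i • k i) (x1, x2) := hF
        _ = ∑ i, (l i • k i) (x1, x2) := by rw [Finset.sum_apply]
        _ = ((∑ i, l i • v2 i x1 : bddV X2) : X2 → ℝ) x2 := by
            rw [AddSubmonoidClass.coe_finset_sum, Finset.sum_apply]
            rfl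
      have e2 := congrArg P2 e1
      rw [map_add, map_smul, hP2one, map_sum] at e2
      simp only [map_smul, smul_eq_mul, mul_one] at e2
      -- e2 : (f x1 - m) + P2 ⟨h, hhG⟩ = ∑ i, l i * P2 (v2 i x1)
      show f x1 + (c2 - m) * 1 = ((∑ i, l i • (⟨w1 i, hw1G i⟩ : bddV X1) : bddV X1) : X1 → ℝ) x1
      rw [AddSubmonoidClass.coe_finset_sum, Finset.sum_apply]
      calc f x1 + (c2 - m) * 1 = (f x1 - m) + c2 := by ring
      _ = ∑ i, l i * P2 (v2 i x1) := by rw [hc2]; exact e2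
      _ = ∑ i, ((l i • (⟨w1 i, hw1G i⟩ : bddV X1) : bddV X1) : X1 → ℝ) x1 := rfl
    have hPcomp : P1 ⟨f, hfG⟩ + (c2 - m) = ∑ i, l i * P1 ⟨w1 i, hw1G i⟩ := by
      have e3 := congrArg P1 hGdef
      rw [map_add, map_smul, hP1one, map_sum] at e3
      simpa only [map_smul, smul_eq_mul, mul_one] using e3
    have hterm : ∀ i, 0 ≤ P1 ⟨w1 i, hw1G i⟩ := by
      intro i
      rcases hk i with (⟨f2, hf2, B1, _, hkeq⟩ | ⟨f1, hf1, B2, _, hkeq⟩) | ⟨_, hgp0, _⟩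
      · refine hP1pos _ (Pi.le_def.2 fun x1 => ?_)
        have hv2eq : v2 i x1 = ind B1 x1 • (⟨f2, hE2.subset_gambles f2 hf2⟩ : bddV X2) := by
          apply Subtype.ext
          funext x2
          exact (congrFun hkeq (x1, x2)).trans (mul_comm _ _)
        show (0 : ℝ) ≤ w1 i x1
        have hval : w1 i x1 = ind B1 x1 * P2 ⟨f2, hE2.subset_gambles f2 hf2⟩ := by
          show P2 (v2 i x1) = _
          rw [hv2eq, map_smul, smul_eq_mul]
        rw [hval]
        exact mul_nonneg (ind_nonneg _ _) (hP2E _ hf2)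
      · have hcnn : 0 ≤ P2 ⟨ind B2, isGamble_ind B2⟩ :=
          hP2pos _ (Pi.le_def.2 fun x2 => by
            show (0 : ℝ) ≤ ind B2 x2
            exact ind_nonneg _ _)
        have hwV : (⟨w1 i, hw1G i⟩ : bddV X1) =
            P2 ⟨ind B2, isGamble_ind B2⟩ • (⟨f1, hE1.subset_gambles f1 hf1⟩ : bddV X1) := by
          apply Subtype.ext
          funext x1
          have hv2eq : v2 i x1 = f1 x1 • (⟨ind B2, isGamble_ind B2⟩ : bddV X2) := by
            apply Subtype.ext
            funext x2
            exact congrFun hkeq (x1, x2)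
          show w1 i x1 = _
          calc w1 i x1 = P2 (v2 i x1) := rfl
          _ = f1 x1 * P2 ⟨ind B2, isGamble_ind B2⟩ := by rw [hv2eq, map_smul, smul_eq_mul]
          _ = P2 ⟨ind B2, isGamble_ind B2⟩ * f1 x1 := mul_comm _ _
        rw [hwV, map_smul, smul_eq_mul]
        exact mul_nonneg hcnn (hP1E _ hf1)
      · refine hP1pos _ (Pi.le_def.2 fun x1 => ?_)
        show (0 : ℝ) ≤ w1 i x1
        refine hP2pos _ (Pi.le_def.2 fun x2 => ?_)
        show (0 : ℝ) ≤ k i (x1, x2)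
        exact Pi.le_def.1 hgp0 (x1, x2)
    have hsum_nonneg : (0 : ℝ) ≤ ∑ i, l i * P1 ⟨w1 i, hw1G i⟩ :=
      Finset.sum_nonneg (fun i _ => mul_nonneg (hl i).le (hterm i))
    rw [← hPcomp] at hsum_nonneg
    linarith
  have hSbdd : BddAbove S := ⟨sSup S1 + sSup S2, hub⟩
  -- the easy direction
  have hlb : sSup S1 + sSup S2 ≤ sSup S := by
    apply my_le_of_eps
    intro ε hε
    obtain ⟨m1, hm1, hm1gt⟩ := exists_lt_of_lt_csSup hS1ne (sub_lt_self (sSup S1) (half_pos hε))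
    obtain ⟨m2, hm2, hm2gt⟩ := exists_lt_of_lt_csSup hS2ne (sub_lt_self (sSup S2) (half_pos hε))
    have hmem : m1 + m2 ∈ S := by
      show (fun x : X1 × X2 => f x.1 + h x.2 - (m1 + m2)) ∈ indNatExt E1 E2 F1 F2
      have heq : (fun x : X1 × X2 => f x.1 + h x.2 - (m1 + m2)) =
          (fun x : X1 × X2 => (h x.2 - m2) * ind Set.univ x.1) +
            fun x : X1 × X2 => (f x.1 - m1) * ind Set.univ x.2 := by
        funext x
        show f x.1 + h x.2 - (m1 + m2) =
          (h x.2 - m2) * ind Set.univ x.1 + (f x.1 - m1) * ind Set.univ x.2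
        simp only [ind, Set.indicator_univ, Pi.one_apply, mul_one]
        ring
      rw [heq]
      refine posi_add (mem_posi (Or.inl (Or.inl ⟨fun y => h y - m2, hm2, Set.univ, ?_, rfl⟩)))
        (mem_posi (Or.inl (Or.inr ⟨fun y => f y - m1, hm1, Set.univ, ?_, rfl⟩)))
      · exact Or.inr rfl
      · exact Or.inr rfl
    have := le_csSup hSbdd hmem
    linarith
  have hmain : sSup S = sSup S1 + sSup S2 := le_antisymm (csSup_le hSne hub) hlb
  have L1 : lpOf (indNatExt E1 E2 F1 F2) (fun p : X1 × X2 => f p.1 + h p.2) Set.univ =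
      ((sSup S : ℝ) : EReal) := by
    rw [lpOf_univ]
    exact sSup_image_toEReal hSne hSbdd
  have L2 : lpOf E1 f Set.univ = ((sSup S1 : ℝ) : EReal) := by
    rw [lpOf_univ]
    exact sSup_image_toEReal hS1ne hS1bdd
  have L3 : lpOf E2 h Set.univ = ((sSup S2 : ℝ) : EReal) := by
    rw [lpOf_univ]
    exact sSup_image_toEReal hS2ne hS2bdd
  rw [L1, L2, L3, ← EReal.coe_add]
  exact_mod_cast congrArg Real.toEReal hmain

end Aux

/-- Corollary 7, External additivity. -/
theorem stmt16 {X1 X2 : Type*} [Nonempty X1] [Nonempty X2]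
    (C1 : Set ((X1 → ℝ) × Set X1)) (hC1 : C1 ⊆ domC X1)
    (lp1 : (X1 → ℝ) → Set X1 → EReal) (hlp1 : Coherent C1 lp1)
    (C2 : Set ((X2 → ℝ) × Set X2)) (hC2 : C2 ⊆ domC X2)
    (lp2 : (X2 → ℝ) → Set X2 → EReal) (hlp2 : Coherent C2 lp2)
    (F1 : Set (Set X1)) (F2 : Set (Set X2))
    (hF1 : ∀ A ∈ F1, A.Nonempty) (hF2 : ∀ A ∈ F2, A.Nonempty)
    (f : X1 → ℝ) (h : X2 → ℝ) (hf : IsGamble f) (hh : IsGamble h) :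
    lpProd C1 lp1 C2 lp2 F1 F2 (fun p => f p.1 + h p.2) Set.univ =
      natExtLP C1 lp1 f Set.univ + natExtLP C2 lp2 h Set.univ := by
  have hE1 := coherent_ElpSet hC1 hlp1
  have hE2 := coherent_ElpSet hC2 hlp2
  exact key_additivity hE1 hE2 F1 F2 f h hf hh

end IPaper
end

section
/- A conditional lower prevision lp on C ⊆ C(X) is coherent if and only if there is a nonempty set ℙ* of conditional linear previsions on C(X) such that lp(f|B) = inf{ P(f|B) : P ∈ ℙ* } for all (f,B) ∈ C; moreover, when lp is coherent, ℙ* can be chosen so that this infimum is attained (a minimum) for every (f,B) ∈ C. -/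
open scoped BigOperators

namespace IPaper

variable {X : Type*}

section Stmt17Aux

variable {X : Type*}

lemma ind_mem {B : Set X} {x : X} (h : x ∈ B) : ind B x = 1 := by
  simp [ind, Set.indicator_of_mem h]

lemma ind_not_mem {B : Set X} {x : X} (h : x ∉ B) : ind B x = 0 := by
  simp [ind, Set.indicator_of_notMem h]

lemma ind_le_one (B : Set X) (x : X) : ind B x ≤ 1 := by
  by_cases h : x ∈ B
  · rw [ind_mem h]
  · rw [ind_not_mem h]; norm_num

/-- The "cut" gamble `(f - m)·1_B`. -/
noncomputable def cutG (f : X → ℝ) (m : ℝ) (B : Set X) : X → ℝ := fun x => (f x - m) * ind B x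

lemma isGamble_cutG {f : X → ℝ} (hf : IsGamble f) (m : ℝ) (B : Set X) :
    IsGamble (cutG f m B) := by
  obtain ⟨M, hM⟩ := hf
  refine ⟨M + |m|, fun x => ?_⟩
  have h1 : |f x - m| ≤ M + |m| := (abs_sub _ _).trans (by gcongr; exact hM x)
  have h2 : |ind B x| ≤ 1 := by
    rw [abs_of_nonneg (ind_nonneg B x)]; exact ind_le_one B x
  calc |(f x - m) * ind B x| = |f x - m| * |ind B x| := abs_mul _ _
    _ ≤ (M + |m|) * 1 := by
        apply mul_le_mul h1 h2 (abs_nonneg _)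
        exact le_trans (abs_nonneg _) h1
    _ = M + |m| := mul_one _

lemma isGamble_smul {f : X → ℝ} (hf : IsGamble f) (l : ℝ) : IsGamble (l • f) := by
  obtain ⟨M, hM⟩ := hf
  exact ⟨|l| * M, fun x => by
    simp only [Pi.smul_apply, smul_eq_mul, abs_mul]
    exact mul_le_mul_of_nonneg_left (hM x) (abs_nonneg l)⟩

lemma isGamble_add {f g : X → ℝ} (hf : IsGamble f) (hg : IsGamble g) : IsGamble (f + g) := by
  obtain ⟨M, hM⟩ := hf; obtain ⟨N, hN⟩ := hg
  exact ⟨M + N, fun x => (abs_add_le _ _).trans (add_le_add (hM x) (hN x))⟩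

lemma isGamble_neg {f : X → ℝ} (hf : IsGamble f) : IsGamble (-f) := by
  obtain ⟨M, hM⟩ := hf
  exact ⟨M, fun x => by simpa using hM x⟩

lemma isGamble_sub {f g : X → ℝ} (hf : IsGamble f) (hg : IsGamble g) : IsGamble (f - g) := by
  rw [sub_eq_add_neg]; exact isGamble_add hf (isGamble_neg hg)

/-- The set of acceptable buying prices. -/
def Sset (D : Set (X → ℝ)) (f : X → ℝ) (B : Set X) : Set ℝ := {m | cutG f m B ∈ D}

lemma lpOf_eq_sSup (D : Set (X → ℝ)) (f : X → ℝ) (B : Set X) :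
    lpOf D f B = sSup (Real.toEReal '' Sset D f B) := rfl

/-- A positive constant on a nonempty event is desirable. -/
lemma const_ind_mem {D : Set (X → ℝ)} (hD : CoherentSDG D) {B : Set X} (hB : B.Nonempty)
    {c : ℝ} (hc : 0 < c) : (fun x => c * ind B x) ∈ D := by
  obtain ⟨b, hb⟩ := hB
  have hg : IsGamble (fun x => c * ind B x) := by
    refine ⟨c, fun x => ?_⟩
    show |c * ind B x| ≤ c
    by_cases h : x ∈ B
    · rw [ind_mem h, mul_one, abs_of_pos hc]
    · rw [ind_not_mem h, mul_zero, abs_zero]; exact hc.le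
  apply hD.d1 _ hg
  · intro x
    show (0:ℝ) ≤ c * ind B x
    exact mul_nonneg hc.le (ind_nonneg B x)
  · intro h0
    have := congrFun h0 b
    rw [ind_mem hb, mul_one] at this
    exact hc.ne' (by simpa using this)

lemma Sset_down {D : Set (X → ℝ)} (hD : CoherentSDG D) {f : X → ℝ} {B : Set X}
    (hB : B.Nonempty) {m m' : ℝ} (hmm : m' ≤ m) (hm : m ∈ Sset D f B) : m' ∈ Sset D f B := by
  rcases eq_or_lt_of_le hmm with rfl | hlt
  · exact hm
  · have key : cutG f m' B = cutG f m B + fun x => (m - m') * ind B x := by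
      funext x; simp only [cutG, Pi.add_apply]; ring
    have : cutG f m B + (fun x => (m - m') * ind B x) ∈ D :=
      hD.d3 _ hm _ (const_ind_mem hD hB (by linarith))
    rw [Sset, Set.mem_setOf_eq, key]; exact this

lemma Sset_spec {D : Set (X → ℝ)} (hD : CoherentSDG D) {f : X → ℝ} {B : Set X}
    (hf : IsGamble f) (hB : B.Nonempty) :
    ∃ M : ℝ, (∀ x, |f x| ≤ M) ∧ (-(M + 1)) ∈ Sset D f B ∧ ∀ m ∈ Sset D f B, m ≤ M := by
  obtain ⟨M, hM⟩ := hf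
  obtain ⟨b, hb⟩ := hB
  refine ⟨M, hM, ?_, ?_⟩
  · apply hD.d1 _ (isGamble_cutG ⟨M, hM⟩ _ _)
    · intro x
      simp only [Pi.zero_apply]
      by_cases h : x ∈ B
      · simp only [cutG, ind_mem h, mul_one]
        have := abs_le.1 (hM x)
        linarith [this.1]
      · simp [cutG, ind_not_mem h]
    · intro h0
      have := congrFun h0 b
      simp only [cutG, ind_mem hb, mul_one, Pi.zero_apply] at this
      have := abs_le.1 (hM b)
      linarith [this.1]
  · intro m hm
    by_contra hmM
    push_neg at hmM
    apply hD.d4 (cutG f m B) _ hm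
    intro x
    simp only [Pi.zero_apply]
    by_cases h : x ∈ B
    · simp only [cutG, ind_mem h, mul_one]
      have := abs_le.1 (hM x)
      linarith [this.2]
    · simp [cutG, ind_not_mem h]

lemma Sset_nonempty {D : Set (X → ℝ)} (hD : CoherentSDG D) {f : X → ℝ} {B : Set X}
    (hf : IsGamble f) (hB : B.Nonempty) : (Sset D f B).Nonempty := by
  obtain ⟨M, _, h1, _⟩ := Sset_spec hD hf hB
  exact ⟨_, h1⟩

lemma Sset_bddAbove {D : Set (X → ℝ)} (hD : CoherentSDG D) {f : X → ℝ} {B : Set X}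
    (hf : IsGamble f) (hB : B.Nonempty) : BddAbove (Sset D f B) := by
  obtain ⟨M, _, _, h2⟩ := Sset_spec hD hf hB
  exact ⟨M, h2⟩

lemma sSup_image_coe {A : Set ℝ} (hne : A.Nonempty) (hbdd : BddAbove A) :
    sSup (Real.toEReal '' A) = ((sSup A : ℝ) : EReal) := by
  obtain ⟨M, hM⟩ := hbdd
  obtain ⟨a0, ha0⟩ := hne
  apply le_antisymm
  · apply sSup_le
    rintro x ⟨m, hm, rfl⟩
    exact_mod_cast le_csSup ⟨M, hM⟩ hm
  · have hne' : (Real.toEReal '' A).Nonempty := ⟨_, a0, ha0, rfl⟩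
    have htop : sSup (Real.toEReal '' A) ≠ ⊤ := by
      apply ne_top_of_le_ne_top (EReal.coe_ne_top M)
      apply sSup_le
      rintro x ⟨m, hm, rfl⟩
      exact_mod_cast hM hm
    have hbot : sSup (Real.toEReal '' A) ≠ ⊥ := by
      intro h
      have : ((a0 : ℝ) : EReal) ≤ ⊥ := h ▸ le_sSup ⟨a0, ha0, rfl⟩
      simp at this
    set y := sSup (Real.toEReal '' A) with hy
    have hcoe : ((y.toReal : ℝ) : EReal) = y := EReal.coe_toReal htop hbot
    rw [← hcoe]
    apply EReal.coe_le_coe_iff.2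
    apply csSup_le ⟨a0, ha0⟩
    intro m hm
    have : ((m : ℝ) : EReal) ≤ y := le_sSup ⟨m, hm, rfl⟩
    rw [← hcoe] at this
    exact_mod_cast this

lemma lpOf_eq_coe {D : Set (X → ℝ)} (hD : CoherentSDG D) {f : X → ℝ} {B : Set X}
    (hf : IsGamble f) (hB : B.Nonempty) :
    lpOf D f B = ((sSup (Sset D f B) : ℝ) : EReal) := by
  rw [lpOf_eq_sSup]
  exact sSup_image_coe (Sset_nonempty hD hf hB) (Sset_bddAbove hD hf hB)

lemma lpOf_mono {D D' : Set (X → ℝ)} (h : D ⊆ D') (f : X → ℝ) (B : Set X) :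
    lpOf D f B ≤ lpOf D' f B := by
  rw [lpOf_eq_sSup, lpOf_eq_sSup]
  apply sSup_le_sSup
  apply Set.image_mono
  intro m hm
  exact h hm

/-- Extension of a coherent set by a convex cone of gambles avoiding non-positivity. -/
lemma cone_extend {D : Set (X → ℝ)} (hD : CoherentSDG D) (Q : Set (X → ℝ))
    (hQg : ∀ q ∈ Q, IsGamble q)
    (hQadd : ∀ q ∈ Q, ∀ q' ∈ Q, q + q' ∈ Q)
    (hQsmul : ∀ q ∈ Q, ∀ l : ℝ, 0 < l → l • q ∈ Q)
    (hQpos : ∀ q ∈ Q, ¬ q ≤ 0)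
    (hQpos' : ∀ q ∈ Q, ∀ d ∈ D, ¬ (d + q) ≤ 0) :
    ∃ D' : Set (X → ℝ), CoherentSDG D' ∧ D ⊆ D' ∧ Q ⊆ D' := by
  classical
  refine ⟨D ∪ Q ∪ {x | ∃ d ∈ D, ∃ q ∈ Q, x = d + q}, ?_, ?_, ?_⟩
  · constructor
    · rintro f (⟨hf | hf⟩ | ⟨d, hd, q, hq, rfl⟩)
      · exact hD.subset_gambles f hf
      · exact hQg f hf
      · exact isGamble_add (hD.subset_gambles d hd) (hQg q hq)
    · intro f hf h0 hne
      exact Or.inl (Or.inl (hD.d1 f hf h0 hne))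
    · rintro f (⟨hf | hf⟩ | ⟨d, hd, q, hq, rfl⟩) l hl
      · exact Or.inl (Or.inl (hD.d2 f hf l hl))
      · exact Or.inl (Or.inr (hQsmul f hf l hl))
      · refine Or.inr ⟨l • d, hD.d2 d hd l hl, l • q, hQsmul q hq l hl, ?_⟩
        rw [smul_add]
    · rintro f (⟨hf | hf⟩ | ⟨d, hd, q, hq, rfl⟩) g (⟨hg | hg⟩ | ⟨e, he, r, hr, rfl⟩)
      · exact Or.inl (Or.inl (hD.d3 f hf g hg))
      · exact Or.inr ⟨f, hf, g, hg, rfl⟩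
      · refine Or.inr ⟨f + e, hD.d3 f hf e he, r, hr, ?_⟩; abel
      · exact Or.inr ⟨g, hg, f, hf, by abel⟩
      · exact Or.inl (Or.inr (hQadd f hf g hg))
      · refine Or.inr ⟨e, he, f + r, hQadd f hf r hr, ?_⟩; abel
      · exact Or.inr ⟨d + g, hD.d3 d hd g hg, q, hq, by abel⟩
      · exact Or.inr ⟨d, hd, q + g, hQadd q hq g hg, by abel⟩
      · exact Or.inr ⟨d + e, hD.d3 d hd e he, q + r, hQadd q hq r hr, by abel⟩
    · rintro f hf (⟨h | h⟩ | ⟨d, hd, q, hq, rfl⟩)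
      · exact hD.d4 f hf h
      · exact hQpos f h hf
      · exact hQpos' q hq d hd hf
  · intro d hd; exact Or.inl (Or.inl hd)
  · intro q hq; exact Or.inl (Or.inr hq)

/-- Every coherent set of desirable gambles extends to a complete one. -/
lemma exists_complete_ext {D : Set (X → ℝ)} (hD : CoherentSDG D) :
    ∃ D' : Set (X → ℝ), D ⊆ D' ∧ CoherentSDG D' ∧
      ∀ g : X → ℝ, IsGamble g → g ≠ 0 → g ∈ D' ∨ -g ∈ D' := by
  classical
  set S : Set (Set (X → ℝ)) := {E | CoherentSDG E ∧ D ⊆ E} with hS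
  have hH : ∀ c ⊆ S, IsChain (· ⊆ ·) c → c.Nonempty →
      ∃ ub ∈ S, ∀ s ∈ c, s ⊆ ub := by
    intro c hcS hchain hcne
    refine ⟨⋃₀ c, ⟨?_, ?_⟩, fun s hs => Set.subset_sUnion_of_mem hs⟩
    · obtain ⟨E0, hE0⟩ := hcne
      constructor
      · rintro f ⟨E, hE, hf⟩
        exact (hcS hE).1.subset_gambles f hf
      · intro f hf h0 hne
        exact ⟨E0, hE0, (hcS hE0).1.d1 f hf h0 hne⟩
      · rintro f ⟨E, hE, hf⟩ l hl
        exact ⟨E, hE, (hcS hE).1.d2 f hf l hl⟩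
      · rintro f ⟨E, hE, hf⟩ g ⟨F, hF, hg⟩
        rcases hchain.total hE hF with h | h
        · exact ⟨F, hF, (hcS hF).1.d3 f (h hf) g hg⟩
        · exact ⟨E, hE, (hcS hE).1.d3 f hf g (h hg)⟩
      · rintro f hf ⟨E, hE, hfE⟩
        exact (hcS hE).1.d4 f hf hfE
    · obtain ⟨E0, hE0⟩ := hcne
      exact (hcS hE0).2.trans (Set.subset_sUnion_of_mem hE0)

  obtain ⟨m, hDm, hm⟩ := zorn_subset_nonempty S hH D ⟨hD, le_refl _⟩
  · obtain ⟨hmcoh, hDsub⟩ := hm.prop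
    refine ⟨m, hDm, hmcoh, ?_⟩
    intro g hg hgne
    by_cases hng : -g ∈ m
    · exact Or.inr hng
    left
    -- extend m by the ray through g
    set Q : Set (X → ℝ) := {x | ∃ l : ℝ, 0 < l ∧ x = l • g} with hQdef
    have hpos : ∀ q ∈ Q, ¬ q ≤ 0 := by
      rintro q ⟨l, hl, rfl⟩ hle
      apply hng
      apply hmcoh.d1 _ (isGamble_neg hg)
      · intro x
        have h1 := hle x
        simp only [Pi.smul_apply, smul_eq_mul, Pi.zero_apply] at h1
        have h2 : g x ≤ 0 := nonpos_of_mul_nonpos_right (by linarith) hl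
        simpa using h2
      · simpa using hgne
    have hpos' : ∀ q ∈ Q, ∀ d ∈ m, ¬ (d + q) ≤ 0 := by
      rintro q ⟨l, hl, rfl⟩ d hd hle
      apply hng
      have hkey : ∀ x, l⁻¹ * d x ≤ -g x := by
        intro x
        have h1 := hle x
        simp only [Pi.add_apply, Pi.smul_apply, smul_eq_mul, Pi.zero_apply] at h1
        have h2 : d x ≤ l * (-g x) := by linarith
        calc l⁻¹ * d x ≤ l⁻¹ * (l * (-g x)) := by
              apply mul_le_mul_of_nonneg_left h2 (inv_nonneg.2 hl.le)
          _ = -g x := by field_simp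
      set h : X → ℝ := -g - l⁻¹ • d with hh
      have hrw : -g = l⁻¹ • d + h := by rw [hh]; abel
      by_cases hz : h = 0
      · rw [hrw, hz, add_zero]
        exact hmcoh.d2 d hd l⁻¹ (inv_pos.2 hl)
      · rw [hrw]
        apply hmcoh.d3 _ (hmcoh.d2 d hd l⁻¹ (inv_pos.2 hl))
        apply hmcoh.d1
        · exact isGamble_sub (isGamble_neg hg) (isGamble_smul (hmcoh.subset_gambles d hd) l⁻¹)
        · intro x
          simp only [hh, Pi.sub_apply, Pi.neg_apply, Pi.smul_apply, smul_eq_mul, Pi.zero_apply]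
          linarith [hkey x]
        · exact hz
    obtain ⟨D', hD'coh, hmD', hQD'⟩ := cone_extend hmcoh Q
      (by rintro q ⟨l, hl, rfl⟩; exact isGamble_smul hg l)
      (by rintro q ⟨l, hl, rfl⟩ q' ⟨l', hl', rfl⟩
          exact ⟨l + l', by linarith, (add_smul l l' g).symm⟩)
      (by rintro q ⟨l, hl, rfl⟩ l' hl'
          exact ⟨l' * l, mul_pos hl' hl, smul_smul l' l g⟩)
      hpos hpos'
    have hsub : D' ⊆ m := hm.2 ⟨hD'coh, hDsub.trans hmD'⟩ hmD'
    exact hsub (hQD' ⟨1, one_pos, (one_smul ℝ g).symm⟩)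
/-- For a complete coherent set, `lpOf D` is self-conjugate. -/
lemma lpOf_selfconj {D : Set (X → ℝ)} (hD : CoherentSDG D)
    (hcom : ∀ g : X → ℝ, IsGamble g → g ≠ 0 → g ∈ D ∨ -g ∈ D)
    {f : X → ℝ} {B : Set X} (hf : IsGamble f) (hB : B.Nonempty) :
    lpOf D f B = - lpOf D (-f) B := by
  obtain ⟨b, hb⟩ := hB
  have hnf : IsGamble (-f) := isGamble_neg hf
  rw [lpOf_eq_coe hD hf ⟨b, hb⟩, lpOf_eq_coe hD hnf ⟨b, hb⟩]
  rw [← EReal.coe_neg, EReal.coe_eq_coe_iff]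
  set σ := sSup (Sset D f B) with hσ
  set τ := sSup (Sset D (-f) B) with hτ
  have hSne := Sset_nonempty hD hf ⟨b, hb⟩
  have hTne := Sset_nonempty hD hnf ⟨b, hb⟩
  have hSbdd := Sset_bddAbove hD hf ⟨b, hb⟩
  have hTbdd := Sset_bddAbove hD hnf ⟨b, hb⟩
  have hdisj : ∀ m ∈ Sset D f B, ∀ m' ∈ Sset D (-f) B, m + m' < 0 := by
    intro m hm m' hm'
    by_contra hge
    push_neg at hge
    have hmem : cutG f m B + cutG (-f) m' B ∈ D := hD.d3 _ hm _ hm'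
    apply hD.d4 _  _ hmem
    intro x
    simp only [cutG, Pi.add_apply, Pi.neg_apply]
    have : (f x - m) * ind B x + (-f x - m') * ind B x = (-(m + m')) * ind B x := by ring
    rw [this]
    apply mul_nonpos_of_nonpos_of_nonneg (by linarith) (ind_nonneg B x)
  have h1 : τ ≤ -σ := by
    apply csSup_le hTne
    intro m' hm'
    rw [le_neg]
    apply csSup_le hSne
    intro m hm
    linarith [hdisj m hm m' hm']
  have h2 : -τ ≤ σ := by
    by_contra hlt
    push_neg at hlt
    obtain ⟨m, hm1, hm2⟩ := exists_between hlt
    obtain ⟨m', hm'1, hm'2⟩ := exists_between hm2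
    -- σ < m < m' < -τ
    set g := cutG f m' B with hg
    by_cases hz : g = 0
    · -- f = m' on B
      have hmem : m ∈ Sset D f B := by
        have key : cutG f m B = fun x => (m' - m) * ind B x := by
          funext x
          by_cases hx : x ∈ B
          · have := congrFun hz x
            simp only [hg, cutG, ind_mem hx, mul_one, Pi.zero_apply] at this
            simp only [cutG, ind_mem hx, mul_one]
            linarith
          · simp [cutG, ind_not_mem hx]
        rw [Sset, Set.mem_setOf_eq, key]
        exact const_ind_mem hD ⟨b, hb⟩ (by linarith)
      have := le_csSup hSbdd hmem
      rw [← hσ] at this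
      linarith
    · rcases hcom g (isGamble_cutG hf m' B) hz with hgD | hgD
      · have : m' ≤ σ := le_csSup hSbdd hgD
        linarith
      · have hneg : -g = cutG (-f) (-m') B := by
          funext x
          simp only [hg, cutG, Pi.neg_apply]
          ring
        have hmem : (-m') ∈ Sset D (-f) B := by
          rw [Sset, Set.mem_setOf_eq, ← hneg]; exact hgD
        have := le_csSup hTbdd hmem
        rw [← hτ] at this
        linarith
  linarith

lemma condLinPrev_of_complete [Nonempty X] {D : Set (X → ℝ)} (hD : CoherentSDG D)
    (hcom : ∀ g : X → ℝ, IsGamble g → g ≠ 0 → g ∈ D ∨ -g ∈ D) :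
    CondLinPrev (lpOf D) := by
  refine ⟨⟨D, hD, fun p _ => rfl⟩, ?_⟩
  rintro ⟨f, B⟩ ⟨hf, hB⟩
  exact lpOf_selfconj hD hcom hf hB

/-- Extension attaining the lower prevision at one point. -/
lemma exists_point_ext {D0 : Set (X → ℝ)} (hD0 : CoherentSDG D0) {f : X → ℝ} {B : Set X}
    (hf : IsGamble f) (hB : B.Nonempty) :
    ∃ D' : Set (X → ℝ), D0 ⊆ D' ∧ CoherentSDG D' ∧
      (∀ g : X → ℝ, IsGamble g → g ≠ 0 → g ∈ D' ∨ -g ∈ D') ∧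
      lpOf D' f B = lpOf D0 f B := by
  classical
  obtain ⟨b, hb⟩ := hB
  set μ := sSup (Sset D0 f B) with hμ
  have hSne := Sset_nonempty hD0 hf ⟨b, hb⟩
  have hSbdd := Sset_bddAbove hD0 hf ⟨b, hb⟩
  set q : ℝ → X → ℝ := fun m => fun x => (m - f x) * ind B x with hq
  set Q : Set (X → ℝ) := {x | ∃ l : ℝ, 0 < l ∧ ∃ m : ℝ, μ < m ∧ x = l • q m} with hQ
  have hqg : ∀ m, IsGamble (q m) := by
    intro m
    have := isGamble_cutG hf m B
    obtain ⟨M, hM⟩ := this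
    exact ⟨M, fun x => by
      have := hM x
      simp only [cutG] at this
      simp only [hq]
      rw [show (m - f x) * ind B x = -((f x - m) * ind B x) by ring, abs_neg]
      exact this⟩
  -- key: no positive combination involving Q is nonpositive
  have key1 : ∀ m : ℝ, μ < m → ¬ (q m ≤ 0) := by
    intro m hm hle
    obtain ⟨m'', h1, h2⟩ := exists_between hm
    have hmem : m'' ∈ Sset D0 f B := by
      apply hD0.d1 _ (isGamble_cutG hf m'' B)
      · intro x
        simp only [Pi.zero_apply]
        by_cases hx : x ∈ B
        · have := hle x
          simp only [hq, ind_mem hx, mul_one, Pi.zero_apply] at this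
          simp only [cutG, ind_mem hx, mul_one]
          linarith
        · simp [cutG, ind_not_mem hx]
      · intro h0
        have hcb := congrFun h0 b
        have := hle b
        simp only [hq, ind_mem hb, mul_one, Pi.zero_apply] at this
        simp only [cutG, ind_mem hb, mul_one, Pi.zero_apply] at hcb
        linarith
    have := le_csSup hSbdd hmem
    rw [← hμ] at this
    linarith
  have key2 : ∀ m : ℝ, μ < m → ∀ l : ℝ, 0 < l → ∀ d ∈ D0, ¬ (d + l • q m ≤ 0) := by
    intro m hm l hl d hd hle
    have hmem : m ∈ Sset D0 f B := by
      have hkey : ∀ x, l⁻¹ * d x ≤ cutG f m B x := by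
        intro x
        have := hle x
        simp only [Pi.add_apply, Pi.smul_apply, smul_eq_mul, hq, Pi.zero_apply] at this
        have h2 : d x ≤ l * ((f x - m) * ind B x) := by nlinarith [this]
        calc l⁻¹ * d x ≤ l⁻¹ * (l * ((f x - m) * ind B x)) := by
              apply mul_le_mul_of_nonneg_left h2 (inv_nonneg.2 hl.le)
          _ = cutG f m B x := by simp only [cutG]; field_simp
      set h : X → ℝ := cutG f m B - l⁻¹ • d with hh
      have hrw : cutG f m B = l⁻¹ • d + h := by rw [hh]; abel
      rw [Sset, Set.mem_setOf_eq, hrw]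
      by_cases hz : h = 0
      · rw [hz, add_zero]
        exact hD0.d2 d hd l⁻¹ (inv_pos.2 hl)
      · apply hD0.d3 _ (hD0.d2 d hd l⁻¹ (inv_pos.2 hl))
        apply hD0.d1
        · exact isGamble_sub (isGamble_cutG hf m B)
            (isGamble_smul (hD0.subset_gambles d hd) l⁻¹)
        · intro x
          simp only [hh, Pi.sub_apply, Pi.smul_apply, smul_eq_mul, Pi.zero_apply]
          linarith [hkey x]
        · exact hz
    have := le_csSup hSbdd hmem
    rw [← hμ] at this
    linarith
  obtain ⟨D1, hD1coh, hD01, hQD1⟩ := cone_extend hD0 Q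
    (by rintro x ⟨l, hl, m, hm, rfl⟩; exact isGamble_smul (hqg m) l)
    (by rintro x ⟨l, hl, m, hm, rfl⟩ x' ⟨l', hl', m', hm', rfl⟩
        refine ⟨l + l', by linarith, (l * m + l' * m') / (l + l'), ?_, ?_⟩
        · rw [lt_div_iff₀ (by linarith)]
          nlinarith
        · funext y
          simp only [Pi.add_apply, Pi.smul_apply, smul_eq_mul, hq]
          field_simp
          ring)
    (by rintro x ⟨l, hl, m, hm, rfl⟩ l' hl'
        exact ⟨l' * l, mul_pos hl' hl, m, hm, smul_smul l' l _⟩)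
    (by rintro x ⟨l, hl, m, hm, rfl⟩ hle
        apply key1 m hm
        intro y
        have := hle y
        simp only [Pi.smul_apply, smul_eq_mul, Pi.zero_apply] at this
        have : q m y ≤ 0 := nonpos_of_mul_nonpos_right (by linarith) hl
        exact this)
    (by rintro x ⟨l, hl, m, hm, rfl⟩ d hd hle
        exact key2 m hm l hl d hd hle)
  obtain ⟨D', hD1D', hD'coh, hcom⟩ := exists_complete_ext hD1coh
  refine ⟨D', hD01.trans hD1D', hD'coh, hcom, ?_⟩
  -- lpOf D' f B = μ
  have hub : ∀ m ∈ Sset D' f B, m ≤ μ := by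
    intro m hm
    by_contra hgt
    push_neg at hgt
    obtain ⟨m'', h1, h2⟩ := exists_between hgt
    have hqmem : q m'' ∈ D' := by
      apply hD1D'
      apply hQD1
      exact ⟨1, one_pos, m'', h1, (one_smul ℝ _).symm⟩
    have hsum : cutG f m B + q m'' ∈ D' := hD'coh.d3 _ hm _ hqmem
    apply hD'coh.d4 _ _ hsum
    intro x
    simp only [cutG, Pi.add_apply, hq, Pi.zero_apply]
    have : (f x - m) * ind B x + (m'' - f x) * ind B x = (m'' - m) * ind B x := by ring
    rw [this]
    apply mul_nonpos_of_nonpos_of_nonneg (by linarith) (ind_nonneg B x)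
  rw [lpOf_eq_coe hD'coh hf ⟨b, hb⟩, lpOf_eq_coe hD0 hf ⟨b, hb⟩, EReal.coe_eq_coe_iff]
  apply le_antisymm
  · exact csSup_le (Sset_nonempty hD'coh hf ⟨b, hb⟩) hub
  · apply csSup_le_csSup ⟨μ, hub⟩ hSne
    intro m hm
    exact (hD01.trans hD1D') hm

end Stmt17Aux


lemma reverse_dir {X : Type*} [Nonempty X] {C : Set ((X → ℝ) × Set X)} (hC : C ⊆ domC X)
    {lp : (X → ℝ) → Set X → EReal} (PP : Set ((X → ℝ) → Set X → EReal))
    (hne : PP.Nonempty) (hlin : ∀ P ∈ PP, CondLinPrev P)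
    (hinf : ∀ p ∈ C, lp p.1 p.2 = sInf ((fun P : (X → ℝ) → Set X → EReal => P p.1 p.2) '' PP)) :
    Coherent C lp := by
  classical
  have hch : ∀ P ∈ PP, ∃ E : Set (X → ℝ), CoherentSDG E ∧
      ∀ q ∈ domC X, P q.1 q.2 = lpOf E q.1 q.2 := by
    intro P hP
    obtain ⟨⟨E, hE, hPE⟩, _⟩ := hlin P hP
    exact ⟨E, hE, hPE⟩
  choose! E hE1 hE2 using hch
  obtain ⟨P0, hP0⟩ := hne
  set D : Set (X → ℝ) := ⋂ P ∈ PP, E P with hDdef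
  have hDsub : ∀ P ∈ PP, D ⊆ E P := fun P hP => Set.biInter_subset_of_mem hP
  have hDmem : ∀ g : X → ℝ, (g ∈ D ↔ ∀ P ∈ PP, g ∈ E P) := fun g => Set.mem_iInter₂
  have hD : CoherentSDG D := by
    constructor
    · intro f hf; exact (hE1 P0 hP0).subset_gambles f (hDsub P0 hP0 hf)
    · intro f hf h0 hne'
      exact (hDmem f).2 fun P hP => (hE1 P hP).d1 f hf h0 hne'
    · intro f hf l hl
      exact (hDmem _).2 fun P hP => (hE1 P hP).d2 f ((hDmem f).1 hf P hP) l hl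
    · intro f hf g hg
      exact (hDmem _).2 fun P hP =>
        (hE1 P hP).d3 f ((hDmem f).1 hf P hP) g ((hDmem g).1 hg P hP)
    · intro f hf hfD
      exact (hE1 P0 hP0).d4 f hf (hDsub P0 hP0 hfD)
  refine ⟨D, hD, ?_⟩
  intro p hp
  obtain ⟨hp1, hp2⟩ := hC hp
  rw [hinf p hp]
  apply le_antisymm
  · -- sInf ≤ lpOf D
    by_contra hlt
    push_neg at hlt
    obtain ⟨m, hm1, hm2⟩ := EReal.exists_between_coe_real hlt
    have hmem : ∀ P ∈ PP, m ∈ Sset (E P) p.1 p.2 := by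
      intro P hP
      have h3 : ((m : ℝ) : EReal) < lpOf (E P) p.1 p.2 := by
        rw [← hE2 P hP p (hC hp)]
        exact lt_of_lt_of_le hm2 (sInf_le ⟨P, hP, rfl⟩)
      rw [lpOf_eq_sSup] at h3
      obtain ⟨b, ⟨m', hm', rfl⟩, hb⟩ := lt_sSup_iff.1 h3
      exact Sset_down (hE1 P hP) hp2 (le_of_lt (by exact_mod_cast hb)) hm'
    have hmemD : m ∈ Sset D p.1 p.2 := by
      rw [Sset, Set.mem_setOf_eq, hDmem]
      intro P hP
      exact hmem P hP
    have : ((m : ℝ) : EReal) ≤ lpOf D p.1 p.2 := by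
      rw [lpOf_eq_sSup]
      exact le_sSup ⟨m, hmemD, rfl⟩
    exact absurd (lt_of_le_of_lt this hm1) (lt_irrefl _)
  · apply le_sInf
    rintro y ⟨P, hP, rfl⟩
    show lpOf D p.1 p.2 ≤ P p.1 p.2
    rw [hE2 P hP p (hC hp)]
    exact lpOf_mono (hDsub P hP) p.1 p.2

lemma forward_dir {X : Type*} [Nonempty X] {C : Set ((X → ℝ) × Set X)} (hC : C ⊆ domC X)
    {lp : (X → ℝ) → Set X → EReal} (h : Coherent C lp) :
    ∃ PP : Set ((X → ℝ) → Set X → EReal), PP.Nonempty ∧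
      (∀ P ∈ PP, CondLinPrev P) ∧
      (∀ p ∈ C, lp p.1 p.2 = sInf ((fun P : (X → ℝ) → Set X → EReal => P p.1 p.2) '' PP)) ∧
      ∀ p ∈ C, ∃ P ∈ PP, P p.1 p.2 = lp p.1 p.2 := by
  classical
  obtain ⟨D0, hD0, hlp⟩ := h
  obtain ⟨Db, hDb1, hDb2, hDb3⟩ := exists_complete_ext hD0
  have hex : ∀ p ∈ C, ∃ D' : Set (X → ℝ), D0 ⊆ D' ∧ CoherentSDG D' ∧
      (∀ g : X → ℝ, IsGamble g → g ≠ 0 → g ∈ D' ∨ -g ∈ D') ∧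
      lpOf D' p.1 p.2 = lpOf D0 p.1 p.2 := by
    intro p hp
    exact exists_point_ext hD0 (hC hp).1 (hC hp).2
  choose! Dm hDm1 hDm2 hDm3 hDm4 using hex
  refine ⟨insert (lpOf Db) ((fun p => lpOf (Dm p)) '' C), ⟨_, Set.mem_insert _ _⟩, ?_, ?_, ?_⟩
  · rintro P (rfl | ⟨p, hp, rfl⟩)
    · exact condLinPrev_of_complete hDb2 hDb3
    · exact condLinPrev_of_complete (hDm2 p hp) (hDm3 p hp)
  · intro p hp
    rw [hlp p hp]
    apply le_antisymm
    · apply le_sInf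
      rintro y ⟨P, (rfl | ⟨q, hq, rfl⟩), rfl⟩
      · exact lpOf_mono hDb1 p.1 p.2
      · exact lpOf_mono (hDm1 q hq) p.1 p.2
    · exact sInf_le ⟨lpOf (Dm p), Set.mem_insert_of_mem _ ⟨p, hp, rfl⟩, hDm4 p hp⟩
  · intro p hp
    exact ⟨lpOf (Dm p), Set.mem_insert_of_mem _ ⟨p, hp, rfl⟩,
      (hDm4 p hp).trans (hlp p hp).symm⟩


/-- Proposition 17, lower envelope theorem: coherence is equivalent to
being a lower envelope of conditional linear previsions; for coherent `lp` the
envelope can be chosen so that the infimum is attained. -/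
theorem stmt17 {X : Type*} [Nonempty X] (C : Set ((X → ℝ) × Set X)) (hC : C ⊆ domC X)
    (lp : (X → ℝ) → Set X → EReal) :
    (Coherent C lp ↔
      ∃ PP : Set ((X → ℝ) → Set X → EReal), PP.Nonempty ∧
        (∀ P ∈ PP, CondLinPrev P) ∧
        ∀ p ∈ C, lp p.1 p.2 = sInf ((fun P : (X → ℝ) → Set X → EReal => P p.1 p.2) '' PP)) ∧
    (Coherent C lp →
      ∃ PP : Set ((X → ℝ) → Set X → EReal), PP.Nonempty ∧
        (∀ P ∈ PP, CondLinPrev P) ∧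
        (∀ p ∈ C, lp p.1 p.2 = sInf ((fun P : (X → ℝ) → Set X → EReal => P p.1 p.2) '' PP)) ∧
        ∀ p ∈ C, ∃ P ∈ PP, P p.1 p.2 = lp p.1 p.2) := by
  constructor
  · constructor
    · intro h
      obtain ⟨PP, h1, h2, h3, _⟩ := forward_dir hC h
      exact ⟨PP, h1, h2, h3⟩
    · rintro ⟨PP, h1, h2, h3⟩
      exact reverse_dir hC PP h1 h2 h3
  · intro h
    exact forward_dir hC h

end IPaper
end
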